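/- Let A = (a_{ij}) ∈ ℝ^{d×d} satisfy a_{ji} = −a_{ij} for all i ≠ j and −1 ≤ a_{ij} + a_{jk} + a_{ki} ≤ 1 for all pairwise distinct i,j,k. Then for every ℓ ≥ 3 and every sequence of pairwise distinct indices i_1, i_2, …, i_ℓ ∈ [d], the cyclic sum satisfies a_{i_1 i_2} + a_{i_2 i_3} + ⋯ + a_{i_{ℓ−1} i_ℓ} + a_{i_ℓ i_1} ≤ ℓ − 2. -/

import Mathlib

open scoped BigOperators

/-- for a matrix with `a_{ji} = -a_{ij}` (off-diagonal) and
`-1 ≤ a_{ij} + a_{jk} + a_{ki} ≤ 1` for pairwise distinct indices, every cyclic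
sum along `ℓ ≥ 3` pairwise distinct indices is at most `ℓ - 2`.
The indices `i_1,…,i_ℓ` are encoded as an injective map `f : Fin ℓ → Fin d`,
and `finRotate ℓ` is the cyclic successor `m ↦ m + 1` on `Fin ℓ`. -/
theorem cyclic_sum_le (d : ℕ) (A : Matrix (Fin d) (Fin d) ℝ)
    (hskew : ∀ i j, i ≠ j → A j i = -A i j)
    (htriple : ∀ i j k, i ≠ j → j ≠ k → i ≠ k →
      -1 ≤ A i j + A j k + A k i ∧ A i j + A j k + A k i ≤ 1)
    (ℓ : ℕ) (hℓ : 3 ≤ ℓ) (f : Fin ℓ → Fin d) (hf : Function.Injective f) :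
    ∑ m : Fin ℓ, A (f m) (f (finRotate ℓ m)) ≤ (ℓ : ℝ) - 2 := by
  induction ℓ, hℓ using Nat.le_induction with
  | base =>
      simp only [finRotate_succ_apply, Fin.sum_univ_three]
      have h01 : f 0 ≠ f 1 := hf.ne (by decide)
      have h12 : f 1 ≠ f 2 := hf.ne (by decide)
      have h02 : f 0 ≠ f 2 := hf.ne (by decide)
      have := (htriple (f 0) (f 1) (f 2) h01 h12 h02).2
      norm_num
      convert this using 2
      all_goals rfl
  | succ n hn ih =>
      obtain ⟨k, rfl⟩ : ∃ k, n = k + 1 := ⟨n - 1, by omega⟩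
      set g : Fin (k + 1) → Fin d := fun i => f i.castSucc with hg
      have hginj : Function.Injective g :=
        hf.comp (Fin.castSucc_injective _)
      have hIH := ih g hginj
      set p : Fin d := f (Fin.last k).castSucc with hp
      set q : Fin d := f (Fin.last (k + 1)) with hq
      set r : Fin d := f 0 with hr
      have hcast : ∀ j : Fin k, ((j.castSucc + 1 : Fin (k+1)).castSucc : Fin (k+2))
          = j.castSucc.castSucc + 1 := by
        intro j
        have hj := j.isLt
        have h1 : (j.castSucc : Fin (k+1)) < Fin.last k := by
          simp [Fin.lt_def]
        have h2 : (j.castSucc.castSucc : Fin (k+2)) < Fin.last (k+1) := by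
          simp [Fin.lt_def]
        ext
        rw [Fin.coe_castSucc, Fin.val_add_one_of_lt h1, Fin.val_add_one_of_lt h2]
        simp
      have hlast1 : ((Fin.last k : Fin (k+1)) + 1 : Fin (k+1)) = 0 := by
        ext; simp [Fin.add_def]
      have hlast2 : ((Fin.last k).castSucc + 1 : Fin (k+2)) = Fin.last (k+1) := by
        ext; simp [Fin.add_def, Nat.mod_eq_of_lt]
      have hlast3 : ((Fin.last (k+1) : Fin (k+2)) + 1 : Fin (k+2)) = 0 := by
        ext; simp [Fin.add_def]
      have hL : ∑ m : Fin (k+2), A (f m) (f (finRotate (k+2) m))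
          = (∑ j : Fin k, A (f j.castSucc.castSucc) (f (j.castSucc.castSucc + 1)))
            + A p q + A q r := by
        simp only [finRotate_succ_apply]
        rw [Fin.sum_univ_castSucc (n := k+1), Fin.sum_univ_castSucc (n := k)]
        rw [hlast2, hlast3, hp, hq, hr]
      have hR : ∑ m : Fin (k+1), A (g m) (g (finRotate (k+1) m))
          = (∑ j : Fin k, A (f j.castSucc.castSucc) (f (j.castSucc.castSucc + 1)))
            + A p r := by
        simp only [finRotate_succ_apply]
        rw [Fin.sum_univ_castSucc (n := k)]
        simp only [hg, hlast1, hcast, Fin.castSucc_zero, hp, hr]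
      have hpq : p ≠ q := hf.ne (by simp only [Ne, Fin.ext_iff]; simp)
      have hqr : q ≠ r := hf.ne (by simp only [Ne, Fin.ext_iff]; simp)
      have hpr : p ≠ r := hf.ne (by simp only [Ne, Fin.ext_iff]; simp; omega)
      have htri := (htriple p q r hpq hqr hpr).2
      have hs : A r p = - A p r := hskew p r hpr
      rw [hR] at hIH
      rw [hL]
      push_cast at hIH ⊢
      linarith
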